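/- Let P be a distribution on finite 𝒳 and define for β ≥ 0 the tilted distribution P^(β)(x) ∝ P(x)^β. The Shannon entropy H(P^(β)) is continuous and non-increasing in β on [0, ∞), with H(P^(0)) = log|𝒳| and H(P^(1)) = H(P). Consequently, for any α with H(P) ≤ α ≤ log|𝒳| there exists β ∈ [0,1] with H(P^(β)) = α. -/

import Mathlib

open Real Finset

noncomputable def shannonEnt {𝒳 : Type*} [Fintype 𝒳] (Q : 𝒳 → ℝ) : ℝ :=
  -∑ x, Q x * Real.log (Q x)

section aux
variable {𝒳 : Type*} [Fintype 𝒳] {P : 𝒳 → ℝ}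

noncomputable def Zfun (P : 𝒳 → ℝ) (β : ℝ) : ℝ := ∑ x, P x ^ β
noncomputable def Bfun (P : 𝒳 → ℝ) (β : ℝ) : ℝ := ∑ x, P x ^ β * Real.log (P x)
noncomputable def Cfun (P : 𝒳 → ℝ) (β : ℝ) : ℝ := ∑ x, P x ^ β * Real.log (P x) ^ 2
noncomputable def Ffun (P : 𝒳 → ℝ) (β : ℝ) : ℝ :=
  Real.log (Zfun P β) - β * Bfun P β / Zfun P β

lemma Zpos [Nonempty 𝒳] (hP0 : ∀ x, 0 < P x) (β : ℝ) : 0 < Zfun P β :=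
  Finset.sum_pos (fun x _ => Real.rpow_pos_of_pos (hP0 x) β) univ_nonempty

lemma hasDerivZ (hP0 : ∀ x, 0 < P x) (β : ℝ) : HasDerivAt (Zfun P) (Bfun P β) β := by
  apply HasDerivAt.fun_sum
  intro x _
  simpa using (Real.hasStrictDerivAt_const_rpow (hP0 x) β).hasDerivAt

lemma hasDerivB (hP0 : ∀ x, 0 < P x) (β : ℝ) : HasDerivAt (Bfun P) (Cfun P β) β := by
  apply HasDerivAt.fun_sum
  intro x _
  have h := ((Real.hasStrictDerivAt_const_rpow (hP0 x) β).hasDerivAt).mul_const (Real.log (P x))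
  simpa [sq, mul_assoc, mul_comm, mul_left_comm] using h

lemma CS (hP0 : ∀ x, 0 < P x) (β : ℝ) : Bfun P β ^ 2 ≤ Zfun P β * Cfun P β := by
  have h := Finset.sum_mul_sq_le_sq_mul_sq Finset.univ
    (fun x => P x ^ (β/2)) (fun x => P x ^ (β/2) * Real.log (P x))
  have e2 : ∀ x : 𝒳, (P x ^ (β/2)) ^ 2 = P x ^ β := by
    intro x
    rw [sq, ← Real.rpow_add (hP0 x)]
    ring_nf
  have e1 : ∀ x : 𝒳, P x ^ (β/2) * (P x ^ (β/2) * Real.log (P x)) = P x ^ β * Real.log (P x) := by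
    intro x
    rw [← mul_assoc, ← Real.rpow_add (hP0 x)]
    ring_nf
  have e3 : ∀ x : 𝒳, (P x ^ (β/2) * Real.log (P x)) ^ 2 = P x ^ β * Real.log (P x) ^ 2 := by
    intro x
    rw [mul_pow, e2]
  simp only [e1, e2, e3] at h
  exact h

lemma hasDerivF [Nonempty 𝒳] (hP0 : ∀ x, 0 < P x) (β : ℝ) :
    HasDerivAt (Ffun P)
      (-(β * (Zfun P β * Cfun P β - Bfun P β ^ 2) / Zfun P β ^ 2)) β := by
  have hZ := Zpos hP0 β
  have h1 : HasDerivAt (fun b => Real.log (Zfun P b)) (Bfun P β / Zfun P β) β :=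
    (hasDerivZ hP0 β).log hZ.ne'
  have h2 : HasDerivAt (fun b => b * Bfun P b / Zfun P b)
      ((( 1 * Bfun P β + β * Cfun P β) * Zfun P β - β * Bfun P β * Bfun P β) / Zfun P β ^ 2) β :=
    ((hasDerivAt_id β).mul (hasDerivB hP0 β)).div (hasDerivZ hP0 β) hZ.ne'
  have := h1.fun_sub h2
  refine this.congr_deriv ?_
  field_simp [hZ.ne']
  ring

lemma F_eq_ent [Nonempty 𝒳] (hP0 : ∀ x, 0 < P x) (β : ℝ) :
    shannonEnt (fun x => P x ^ β / ∑ x', P x' ^ β) = Ffun P β := by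
  have hZ := Zpos hP0 β
  have hZ' : (∑ x', P x' ^ β) = Zfun P β := rfl
  unfold shannonEnt Ffun
  have key : ∀ x : 𝒳, P x ^ β / Zfun P β * Real.log (P x ^ β / Zfun P β)
      = (β * (P x ^ β * Real.log (P x)) - P x ^ β * Real.log (Zfun P β)) / Zfun P β := by
    intro x
    rw [Real.log_div (Real.rpow_pos_of_pos (hP0 x) β).ne' hZ.ne',
        Real.log_rpow (hP0 x)]
    field_simp
  simp only [hZ', key]
  rw [← Finset.sum_div, Finset.sum_sub_distrib, ← Finset.mul_sum, ← Finset.sum_mul]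
  have : (∑ x : 𝒳, P x ^ β) = Zfun P β := rfl
  rw [this]
  field_simp
  ring_nf
  rw [mul_comm]
  congr 1
  unfold Bfun
  ring

end aux

theorem stmt_18 {𝒳 : Type*} [Fintype 𝒳]
    (P : 𝒳 → ℝ) (hP0 : ∀ x, 0 < P x) (hP1 : ∑ x, P x = 1)
    (f : ℝ → ℝ)
    (hf : ∀ β : ℝ, f β = shannonEnt (fun x => P x ^ β / ∑ x', P x' ^ β)) :
    ContinuousOn f (Set.Ici (0 : ℝ)) ∧
    AntitoneOn f (Set.Ici (0 : ℝ)) ∧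
    f 0 = Real.log (Fintype.card 𝒳) ∧
    f 1 = shannonEnt P ∧
    (∀ α : ℝ, shannonEnt P ≤ α → α ≤ Real.log (Fintype.card 𝒳) →
      ∃ β : ℝ, 0 ≤ β ∧ β ≤ 1 ∧ f β = α) := by
  have hne : Nonempty 𝒳 := by
    rcases isEmpty_or_nonempty 𝒳 with h | h
    · simp at hP1
    · exact h
  have hfF : f = Ffun P := by
    funext β
    rw [hf β, F_eq_ent hP0]
  have hderiv := hasDerivF hP0
  have hdiff : Differentiable ℝ (Ffun P) := fun β => (hderiv β).differentiableAt
  have hcont : Continuous f := hfF ▸ hdiff.continuous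
  have hanti : AntitoneOn f (Set.Ici (0 : ℝ)) := by
    rw [hfF]
    apply antitoneOn_of_deriv_nonpos (convex_Ici 0) (hdiff.continuous.continuousOn)
      (hdiff.differentiableOn)
    intro β hβ
    rw [interior_Ici] at hβ
    rw [(hderiv β).deriv]
    have hβ0 : (0:ℝ) ≤ β := le_of_lt hβ
    have hcs := CS hP0 β
    have hZ := Zpos hP0 β
    have : 0 ≤ β * (Zfun P β * Cfun P β - Bfun P β ^ 2) / Zfun P β ^ 2 := by
      apply div_nonneg (mul_nonneg hβ0 (by linarith)) (sq_nonneg _)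
    linarith
  have hZ0 : Zfun P 0 = (Fintype.card 𝒳 : ℝ) := by
    unfold Zfun
    simp [Real.rpow_zero]
  have hf0 : f 0 = Real.log (Fintype.card 𝒳) := by
    rw [hfF]
    unfold Ffun
    rw [hZ0]
    simp
  have hZ1 : Zfun P 1 = 1 := by
    unfold Zfun
    simp only [Real.rpow_one]
    exact hP1
  have hf1 : f 1 = shannonEnt P := by
    rw [hfF]
    unfold Ffun Bfun
    rw [hZ1]
    simp only [Real.rpow_one, Real.log_one, div_one, one_mul]
    unfold shannonEnt
    ring
  refine ⟨hcont.continuousOn, hanti, hf0, hf1, ?_⟩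
  intro α hα1 hα2
  have hIcc : α ∈ Set.Icc (f 1) (f 0) := ⟨hf1 ▸ hα1, hf0 ▸ hα2⟩
  have := intermediate_value_Icc' (by norm_num : (0:ℝ) ≤ 1) hcont.continuousOn hIcc
  obtain ⟨β, hβ, hβα⟩ := this
  exact ⟨β, hβ.1, hβ.2, hβα⟩
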